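/- With A_n as above, E[A_n^2 | F_n] ≤ (N - n + 1)^2 almost surely for every n ∈ {0,...,N}; in particular A_n is square integrable. -/

import Mathlib

open MeasureTheory Finset

lemma sum_prod_succ (N n : ℕ) (h : n < N) (w f : ℕ → ℝ) :
    ∑ i ∈ Finset.Icc n N, w i * ∏ j ∈ Finset.Icc (n + 1) i, f j
      = w n + f (n + 1) * ∑ i ∈ Finset.Icc (n + 1) N, w i * ∏ j ∈ Finset.Icc (n + 2) i, f j := by
  have h1 : Finset.Icc n N = insert n (Finset.Icc (n + 1) N) := by
    ext m; simp only [Finset.mem_Icc, Finset.mem_insert]; omega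
  rw [h1, Finset.sum_insert (by simp)]
  have h2 : Finset.Icc (n + 1) n = (∅ : Finset ℕ) := by
    apply Finset.Icc_eq_empty; omega
  rw [h2, Finset.prod_empty, mul_one, Finset.mul_sum]
  congr 1
  apply Finset.sum_congr rfl
  intro i hi
  have hi' : n + 1 ≤ i := (Finset.mem_Icc.1 hi).1
  have h3 : Finset.Icc (n + 1) i = insert (n + 1) (Finset.Icc (n + 2) i) := by
    ext m; simp only [Finset.mem_Icc, Finset.mem_insert]; omega
  rw [h3, Finset.prod_insert (by simp)]
  ring

/-- `A_n = ∑_{i=n}^N ω_i ∏_{j=n+1}^i (1 - β_j ΔS_j)`. -/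
def Aproc {Ω : Type*} (N : ℕ) (w β ΔS : ℕ → Ω → ℝ) (n : ℕ) (x : Ω) : ℝ :=
  ∑ i ∈ Finset.Icc n N, w i x * ∏ j ∈ Finset.Icc (n + 1) i, (1 - β j x * ΔS j x)

/-- `D_n = ∑_{i=n}^N ω_i ∏_{j=n+1}^i (1 - β_j ΔS_j)²`. -/
def Dproc {Ω : Type*} (N : ℕ) (w β ΔS : ℕ → Ω → ℝ) (n : ℕ) (x : Ω) : ℝ :=
  ∑ i ∈ Finset.Icc n N, w i x * ∏ j ∈ Finset.Icc (n + 1) i, (1 - β j x * ΔS j x) ^ 2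

section procLemmas
variable {Ω : Type*} {N n : ℕ} {w β ΔS : ℕ → Ω → ℝ} {x : Ω}

lemma Aproc_succ (h : n < N) (x : Ω) :
    Aproc N w β ΔS n x
      = w n x + (1 - β (n + 1) x * ΔS (n + 1) x) * Aproc N w β ΔS (n + 1) x :=
  sum_prod_succ N n h _ _

lemma Dproc_succ (h : n < N) (x : Ω) :
    Dproc N w β ΔS n x
      = w n x + (1 - β (n + 1) x * ΔS (n + 1) x) ^ 2 * Dproc N w β ΔS (n + 1) x :=
  sum_prod_succ N n h _ _

lemma Aproc_last (x : Ω) : Aproc N w β ΔS N x = w N x := by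
  simp [Aproc, Finset.Icc_self, Finset.Icc_eq_empty (by omega : ¬ N + 1 ≤ N)]

lemma Dproc_last (x : Ω) : Dproc N w β ΔS N x = w N x := by
  simp [Dproc, Finset.Icc_self, Finset.Icc_eq_empty (by omega : ¬ N + 1 ≤ N)]

lemma Dproc_nonneg (hw : ∀ i, 0 ≤ w i x) : 0 ≤ Dproc N w β ΔS n x := by
  apply Finset.sum_nonneg
  intro i _
  exact mul_nonneg (hw i) (Finset.prod_nonneg fun j _ => sq_nonneg _)

lemma sq_Aproc_le (hn : n ≤ N) (hw : ∀ i, w i x ∈ Set.Icc (0:ℝ) 1) :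
    Aproc N w β ΔS n x ^ 2 ≤ ((N : ℝ) - n + 1) * Dproc N w β ΔS n x := by
  have key := Finset.sum_sq_le_sum_mul_sum_of_sq_eq_mul (Finset.Icc n N)
    (r := fun i => w i x * ∏ j ∈ Finset.Icc (n + 1) i, (1 - β j x * ΔS j x))
    (f := fun i => w i x)
    (g := fun i => w i x * ∏ j ∈ Finset.Icc (n + 1) i, (1 - β j x * ΔS j x) ^ 2)
    (fun i _ => (hw i).1)
    (fun i _ => mul_nonneg (hw i).1 (Finset.prod_nonneg fun j _ => sq_nonneg _))
    (fun i _ => by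
      show (w i x * ∏ j ∈ Finset.Icc (n + 1) i, (1 - β j x * ΔS j x)) ^ 2
        = w i x * (w i x * ∏ j ∈ Finset.Icc (n + 1) i, (1 - β j x * ΔS j x) ^ 2)
      rw [Finset.prod_pow]
      ring)
  have hcard : ∑ i ∈ Finset.Icc n N, w i x ≤ (N : ℝ) - n + 1 := by
    calc ∑ i ∈ Finset.Icc n N, w i x ≤ ∑ _i ∈ Finset.Icc n N, (1:ℝ) :=
          Finset.sum_le_sum fun i _ => (hw i).2
      _ = ((N + 1 - n : ℕ) : ℝ) := by simp [Nat.card_Icc]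
      _ = (N : ℝ) - n + 1 := by
          have : (n:ℝ) ≤ N := by exact_mod_cast hn
          push_cast [Nat.cast_sub (by omega : n ≤ N + 1)]; ring
  refine key.trans ?_
  apply mul_le_mul_of_nonneg_right hcard
  exact Dproc_nonneg fun i => (hw i).1

end procLemmas

/-- Lemma 1(1), first part: `E[A_n² | F_n] ≤ (N - n + 1)²` a.s. for every `n ∈ {0,…,N}`;
in particular `A_n` is square integrable. -/
theorem stmt_4 {Ω : Type*} {m0 : MeasurableSpace Ω} (μ : Measure Ω) [IsProbabilityMeasure μ]
    (N : ℕ) (ℱ : Filtration ℕ m0) (ΔS w : ℕ → Ω → ℝ) (αp δp β : ℕ → Ω → ℝ)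
    (hw : ∀ n x, w n x ∈ Set.Icc (0 : ℝ) 1)
    (hwa : ∀ n, StronglyMeasurable[ℱ n] (w n))
    (hSa : ∀ n, StronglyMeasurable[ℱ n] (ΔS n))
    (hSloc : ∀ n, Integrable (fun x => ΔS n x ^ 2) μ)
    (hβ : ∀ n x, β n x = αp n x / δp n x)
    (hβ0 : ∀ x, β 0 x = 0)
    (hα : ∀ n ∈ Finset.Icc 1 N,
      αp n =ᵐ[μ] μ[fun x => ΔS n x * Aproc N w β ΔS n x | ℱ (n - 1)])
    (hδ : ∀ n ∈ Finset.Icc 1 N,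
      δp n =ᵐ[μ] μ[fun x => ΔS n x ^ 2 * Dproc N w β ΔS n x | ℱ (n - 1)])
    (hAint : ∀ n, Integrable (Aproc N w β ΔS n) μ)
    (hDint : ∀ n, Integrable (Dproc N w β ΔS n) μ)
    (hSAint : ∀ n, Integrable (fun x => ΔS n x * Aproc N w β ΔS n x) μ)
    (hSDint : ∀ n, Integrable (fun x => ΔS n x ^ 2 * Dproc N w β ΔS n x) μ)
    (hA2int : ∀ n, Integrable (fun x => Aproc N w β ΔS n x ^ 2) μ) :
    ∀ n ≤ N,
      (∀ᵐ x ∂μ, (μ[fun y => Aproc N w β ΔS n y ^ 2 | ℱ n]) x ≤ ((N : ℝ) - n + 1) ^ 2) ∧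
      MemLp (Aproc N w β ΔS n) 2 μ := by
  -- basic facts
  have hD0 : ∀ k x, 0 ≤ Dproc N w β ΔS k x := fun k x => Dproc_nonneg (fun i => (hw i x).1)
  have iW : ∀ k, Integrable (w k) μ := by
    intro k
    refine Integrable.mono' (integrable_const 1)
      ((hwa k).mono (ℱ.le k)).aestronglyMeasurable ?_
    refine Filter.Eventually.of_forall fun x => ?_
    rw [Real.norm_eq_abs, abs_of_nonneg (hw k x).1]
    exact (hw k x).2
  have iSDlin : ∀ k, Integrable (fun x => ΔS k x * Dproc N w β ΔS k x) μ := by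
    intro k
    have hg : Integrable
        (fun x => (ΔS k x ^ 2 * Dproc N w β ΔS k x + Dproc N w β ΔS k x) / 2) μ :=
      ((hSDint k).add (hDint k)).div_const 2
    refine hg.mono'
      (((hSa k).mono (ℱ.le k)).aestronglyMeasurable.mul (hDint k).aestronglyMeasurable) ?_
    refine Filter.Eventually.of_forall fun x => ?_
    rw [Real.norm_eq_abs, abs_mul, abs_of_nonneg (hD0 k x)]
    have h1 : |ΔS k x| ≤ (ΔS k x ^ 2 + 1) / 2 := by
      nlinarith [sq_abs (ΔS k x), sq_nonneg (|ΔS k x| - 1)]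
    nlinarith [mul_le_mul_of_nonneg_right h1 (hD0 k x), hD0 k x]
  -- base case
  have base : (∀ᵐ x ∂μ, (μ[Dproc N w β ΔS N | ℱ N]) x ≤ (N : ℝ) - N + 1) ∧
      μ[Aproc N w β ΔS N | ℱ N] =ᵐ[μ] μ[Dproc N w β ΔS N | ℱ N] := by
    constructor
    · have h1 : μ[Dproc N w β ΔS N | ℱ N] =ᵐ[μ] μ[w N | ℱ N] :=
        condExp_congr_ae (Filter.Eventually.of_forall fun x => Dproc_last x)
      have h2 : μ[w N | ℱ N] = w N :=
        condExp_of_stronglyMeasurable (ℱ.le N) (hwa N) (iW N)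
      filter_upwards [h1] with x hx
      rw [hx, h2]
      have := (hw N x).2
      linarith
    · exact condExp_congr_ae
        (Filter.Eventually.of_forall fun x => by rw [Aproc_last, Dproc_last])
  -- inductive step
  have step : ∀ n, n < N →
      ((∀ᵐ x ∂μ, (μ[Dproc N w β ΔS (n+1) | ℱ (n+1)]) x ≤ (N : ℝ) - (n+1) + 1) ∧
        μ[Aproc N w β ΔS (n+1) | ℱ (n+1)] =ᵐ[μ] μ[Dproc N w β ΔS (n+1) | ℱ (n+1)]) →
      ((∀ᵐ x ∂μ, (μ[Dproc N w β ΔS n | ℱ n]) x ≤ (N : ℝ) - n + 1) ∧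
        μ[Aproc N w β ΔS n | ℱ n] =ᵐ[μ] μ[Dproc N w β ΔS n | ℱ n]) := by
    intro n hnN IH
    obtain ⟨IH1, IH2⟩ := IH
    have hmem : n + 1 ∈ Finset.Icc 1 N := Finset.mem_Icc.2 ⟨by omega, by omega⟩
    have hα' := hα (n + 1) hmem
    have hδ' := hδ (n + 1) hmem
    simp only [Nat.add_sub_cancel] at hα' hδ'
    set α' : Ω → ℝ := μ[fun x => ΔS (n+1) x * Aproc N w β ΔS (n+1) x | ℱ n] with hα'def
    set δ' : Ω → ℝ := μ[fun x => ΔS (n+1) x ^ 2 * Dproc N w β ΔS (n+1) x | ℱ n] with hδ'def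
    have hβ'meas : StronglyMeasurable[ℱ n] (fun x => α' x / δ' x) :=
      (stronglyMeasurable_condExp.measurable.div
        stronglyMeasurable_condExp.measurable).stronglyMeasurable
    have hβae : β (n + 1) =ᵐ[μ] fun x => α' x / δ' x := by
      filter_upwards [hα', hδ'] with x h1 h2
      rw [hβ, h1, h2]
    -- integrability of the cross terms
    have hYae : (fun x => (β (n+1) x * ΔS (n+1) x) ^ 2 * Dproc N w β ΔS (n+1) x) =ᵐ[μ]
        (fun x => (α' x / δ' x * (α' x / δ' x)) * (ΔS (n+1) x ^ 2 * Dproc N w β ΔS (n+1) x)) := by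
      filter_upwards [hβae] with x hx
      rw [hx]; ring
    have iY : Integrable
        (fun x => (β (n+1) x * ΔS (n+1) x) ^ 2 * Dproc N w β ΔS (n+1) x) μ := by
      have hg : Integrable (fun x =>
          2 * (Dproc N w β ΔS n x - w n x) + 2 * Dproc N w β ΔS (n+1) x) μ :=
        (((hDint n).sub (iW n)).const_mul 2).add ((hDint (n+1)).const_mul 2)
      refine hg.mono' ?_ ?_
      · refine AEStronglyMeasurable.congr ?_ hYae.symm
        exact ((((hβ'meas.mono (ℱ.le n)).aestronglyMeasurable.mul
          (((hβ'meas.mono (ℱ.le n)).aestronglyMeasurable))).mul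
          (hSDint (n+1)).aestronglyMeasurable))
      · refine Filter.Eventually.of_forall fun x => ?_
        have hD := hD0 (n+1) x
        have hrec := Dproc_succ (N := N) (w := w) (β := β) (ΔS := ΔS) hnN x
        rw [Real.norm_eq_abs, abs_of_nonneg (mul_nonneg (sq_nonneg _) hD)]
        nlinarith [mul_nonneg (sq_nonneg (β (n+1) x * ΔS (n+1) x - 2)) hD]
    have hXae : (fun x => β (n+1) x * ΔS (n+1) x * Dproc N w β ΔS (n+1) x) =ᵐ[μ]
        (fun x => (α' x / δ' x) * (ΔS (n+1) x * Dproc N w β ΔS (n+1) x)) := by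
      filter_upwards [hβae] with x hx
      rw [hx]; ring
    have iX : Integrable
        (fun x => β (n+1) x * ΔS (n+1) x * Dproc N w β ΔS (n+1) x) μ := by
      have hg : Integrable (fun x =>
          ((β (n+1) x * ΔS (n+1) x) ^ 2 * Dproc N w β ΔS (n+1) x
            + Dproc N w β ΔS (n+1) x) / 2) μ := (iY.add (hDint (n+1))).div_const 2
      refine hg.mono' ?_ ?_
      · refine AEStronglyMeasurable.congr ?_ hXae.symm
        exact (hβ'meas.mono (ℱ.le n)).aestronglyMeasurable.mul (iSDlin (n+1)).aestronglyMeasurable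
      · refine Filter.Eventually.of_forall fun x => ?_
        have hD := hD0 (n+1) x
        rw [Real.norm_eq_abs, abs_mul, abs_of_nonneg hD]
        have h1 : |β (n+1) x * ΔS (n+1) x| ≤ ((β (n+1) x * ΔS (n+1) x) ^ 2 + 1) / 2 := by
          nlinarith [sq_abs (β (n+1) x * ΔS (n+1) x),
            sq_nonneg (|β (n+1) x * ΔS (n+1) x| - 1)]
        nlinarith [mul_le_mul_of_nonneg_right h1 hD, hD]
    have hXAae : (fun x => β (n+1) x * ΔS (n+1) x * Aproc N w β ΔS (n+1) x) =ᵐ[μ]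
        (fun x => (α' x / δ' x) * (ΔS (n+1) x * Aproc N w β ΔS (n+1) x)) := by
      filter_upwards [hβae] with x hx
      rw [hx]; ring
    have iXA : Integrable
        (fun x => β (n+1) x * ΔS (n+1) x * Aproc N w β ΔS (n+1) x) μ := by
      refine (((iW n).add (hAint (n+1))).sub (hAint n)).congr ?_
      refine Filter.Eventually.of_forall fun x => ?_
      simp only [Pi.add_apply, Pi.sub_apply]
      rw [Aproc_succ hnN x]; ring
    -- conditional expectation computations
    have cSD : μ[fun x => ΔS (n+1) x * Dproc N w β ΔS (n+1) x | ℱ n] =ᵐ[μ] α' := by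
      have t1 : μ[fun x => ΔS (n+1) x * Dproc N w β ΔS (n+1) x | ℱ (n+1)] =ᵐ[μ]
          fun x => ΔS (n+1) x * (μ[Dproc N w β ΔS (n+1) | ℱ (n+1)]) x :=
        condExp_mul_of_stronglyMeasurable_left (hSa (n+1)) (iSDlin (n+1)) (hDint (n+1))
      have t2 : μ[fun x => ΔS (n+1) x * Aproc N w β ΔS (n+1) x | ℱ (n+1)] =ᵐ[μ]
          fun x => ΔS (n+1) x * (μ[Aproc N w β ΔS (n+1) | ℱ (n+1)]) x :=
        condExp_mul_of_stronglyMeasurable_left (hSa (n+1)) (hSAint (n+1)) (hAint (n+1))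
      have t3 : μ[fun x => ΔS (n+1) x * Dproc N w β ΔS (n+1) x | ℱ (n+1)] =ᵐ[μ]
          μ[fun x => ΔS (n+1) x * Aproc N w β ΔS (n+1) x | ℱ (n+1)] := by
        filter_upwards [t1, t2, IH2] with x h1 h2 h3
        rw [h1, h2, h3]
      calc μ[fun x => ΔS (n+1) x * Dproc N w β ΔS (n+1) x | ℱ n]
          =ᵐ[μ] μ[μ[fun x => ΔS (n+1) x * Dproc N w β ΔS (n+1) x | ℱ (n+1)] | ℱ n] :=
            (condExp_condExp_of_le (ℱ.mono (Nat.le_succ n)) (ℱ.le (n+1))).symm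
        _ =ᵐ[μ] μ[μ[fun x => ΔS (n+1) x * Aproc N w β ΔS (n+1) x | ℱ (n+1)] | ℱ n] :=
            condExp_congr_ae t3
        _ =ᵐ[μ] α' :=
            condExp_condExp_of_le (ℱ.mono (Nat.le_succ n)) (ℱ.le (n+1))
    have cA1 : μ[Aproc N w β ΔS (n+1) | ℱ n] =ᵐ[μ] μ[Dproc N w β ΔS (n+1) | ℱ n] :=
      calc μ[Aproc N w β ΔS (n+1) | ℱ n]
          =ᵐ[μ] μ[μ[Aproc N w β ΔS (n+1) | ℱ (n+1)] | ℱ n] :=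
            (condExp_condExp_of_le (ℱ.mono (Nat.le_succ n)) (ℱ.le (n+1))).symm
        _ =ᵐ[μ] μ[μ[Dproc N w β ΔS (n+1) | ℱ (n+1)] | ℱ n] := condExp_congr_ae IH2
        _ =ᵐ[μ] μ[Dproc N w β ΔS (n+1) | ℱ n] :=
            condExp_condExp_of_le (ℱ.mono (Nat.le_succ n)) (ℱ.le (n+1))
    have cX : μ[fun x => β (n+1) x * ΔS (n+1) x * Dproc N w β ΔS (n+1) x | ℱ n]
        =ᵐ[μ] fun x => (α' x / δ' x) * α' x := by
      have p1 : μ[fun x => β (n+1) x * ΔS (n+1) x * Dproc N w β ΔS (n+1) x | ℱ n]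
          =ᵐ[μ] μ[(fun x => α' x / δ' x) * (fun x => ΔS (n+1) x * Dproc N w β ΔS (n+1) x) | ℱ n] :=
        condExp_congr_ae hXae
      have p2 : μ[(fun x => α' x / δ' x) * (fun x => ΔS (n+1) x * Dproc N w β ΔS (n+1) x) | ℱ n]
          =ᵐ[μ] (fun x => α' x / δ' x) * μ[fun x => ΔS (n+1) x * Dproc N w β ΔS (n+1) x | ℱ n] :=
        condExp_mul_of_stronglyMeasurable_left hβ'meas (iX.congr hXae) (iSDlin (n+1))
      refine p1.trans (p2.trans ?_)
      filter_upwards [cSD] with x hx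
      simp only [Pi.mul_apply]
      rw [hx]
    have cXA : μ[fun x => β (n+1) x * ΔS (n+1) x * Aproc N w β ΔS (n+1) x | ℱ n]
        =ᵐ[μ] fun x => (α' x / δ' x) * α' x := by
      have p1 : μ[fun x => β (n+1) x * ΔS (n+1) x * Aproc N w β ΔS (n+1) x | ℱ n]
          =ᵐ[μ] μ[(fun x => α' x / δ' x) * (fun x => ΔS (n+1) x * Aproc N w β ΔS (n+1) x) | ℱ n] :=
        condExp_congr_ae hXAae
      have p2 : μ[(fun x => α' x / δ' x) * (fun x => ΔS (n+1) x * Aproc N w β ΔS (n+1) x) | ℱ n]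
          =ᵐ[μ] (fun x => α' x / δ' x) * μ[fun x => ΔS (n+1) x * Aproc N w β ΔS (n+1) x | ℱ n] :=
        condExp_mul_of_stronglyMeasurable_left hβ'meas (iXA.congr hXAae) (hSAint (n+1))
      refine p1.trans (p2.trans ?_)
      exact Filter.Eventually.of_forall fun x => rfl
    have cY : μ[fun x => (β (n+1) x * ΔS (n+1) x) ^ 2 * Dproc N w β ΔS (n+1) x | ℱ n]
        =ᵐ[μ] fun x => (α' x / δ' x * (α' x / δ' x)) * δ' x := by
      have p1 : μ[fun x => (β (n+1) x * ΔS (n+1) x) ^ 2 * Dproc N w β ΔS (n+1) x | ℱ n]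
          =ᵐ[μ] μ[(fun x => α' x / δ' x * (α' x / δ' x)) *
            (fun x => ΔS (n+1) x ^ 2 * Dproc N w β ΔS (n+1) x) | ℱ n] :=
        condExp_congr_ae hYae
      have p2 : μ[(fun x => α' x / δ' x * (α' x / δ' x)) *
            (fun x => ΔS (n+1) x ^ 2 * Dproc N w β ΔS (n+1) x) | ℱ n]
          =ᵐ[μ] (fun x => α' x / δ' x * (α' x / δ' x)) *
            μ[fun x => ΔS (n+1) x ^ 2 * Dproc N w β ΔS (n+1) x | ℱ n] :=
        condExp_mul_of_stronglyMeasurable_left (hβ'meas.mul hβ'meas) (iY.congr hYae) (hSDint (n+1))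
      refine p1.trans (p2.trans ?_)
      exact Filter.Eventually.of_forall fun x => rfl
    -- master identity for D
    have ED : μ[Dproc N w β ΔS n | ℱ n] =ᵐ[μ] fun x =>
        w n x + ((μ[Dproc N w β ΔS (n+1) | ℱ n]) x
          + ((α' x / δ' x * (α' x / δ' x)) * δ' x - 2 * ((α' x / δ' x) * α' x))) := by
      have hpt : Dproc N w β ΔS n =ᵐ[μ] w n +
          (Dproc N w β ΔS (n+1) +
            ((fun x => (β (n+1) x * ΔS (n+1) x) ^ 2 * Dproc N w β ΔS (n+1) x) -
              (2:ℝ) • (fun x => β (n+1) x * ΔS (n+1) x * Dproc N w β ΔS (n+1) x))) := by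
        refine Filter.Eventually.of_forall fun x => ?_
        simp only [Pi.add_apply, Pi.sub_apply, Pi.smul_apply, smul_eq_mul]
        rw [Dproc_succ hnN x]; ring
      have c0 := condExp_congr_ae (m := ℱ n) hpt
      have c1 := condExp_add (m := ℱ n) (μ := μ) (iW n)
        ((hDint (n+1)).add (iY.sub (iX.smul (2:ℝ))))
      have c2 := condExp_add (m := ℱ n) (μ := μ) (hDint (n+1)) (iY.sub (iX.smul (2:ℝ)))
      have c3 := condExp_sub (m := ℱ n) (μ := μ) iY (iX.smul (2:ℝ))
      have c4 := condExp_smul (m := ℱ n) (μ := μ) (2:ℝ)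
        (fun x => β (n+1) x * ΔS (n+1) x * Dproc N w β ΔS (n+1) x)
      have cw : μ[w n | ℱ n] = w n :=
        condExp_of_stronglyMeasurable (ℱ.le n) (hwa n) (iW n)
      filter_upwards [c0, c1, c2, c3, c4, cX, cY] with x h0 h1 h2 h3 h4 h5 h6
      simp only [Pi.add_apply, Pi.sub_apply, Pi.smul_apply, smul_eq_mul] at h0 h1 h2 h3 h4
      rw [h0, h1, cw, h2, h3, h4, h5, h6]
    -- master identity for A
    have EA : μ[Aproc N w β ΔS n | ℱ n] =ᵐ[μ] fun x =>
        w n x + ((μ[Dproc N w β ΔS (n+1) | ℱ n]) x - (α' x / δ' x) * α' x) := by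
      have hpt : Aproc N w β ΔS n =ᵐ[μ] w n +
          (Aproc N w β ΔS (n+1) -
            (fun x => β (n+1) x * ΔS (n+1) x * Aproc N w β ΔS (n+1) x)) := by
        refine Filter.Eventually.of_forall fun x => ?_
        simp only [Pi.add_apply, Pi.sub_apply]
        rw [Aproc_succ hnN x]; ring
      have c0 := condExp_congr_ae (m := ℱ n) hpt
      have c1 := condExp_add (m := ℱ n) (μ := μ) (iW n) ((hAint (n+1)).sub iXA)
      have c2 := condExp_sub (m := ℱ n) (μ := μ) (hAint (n+1)) iXA
      have cw : μ[w n | ℱ n] = w n :=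
        condExp_of_stronglyMeasurable (ℱ.le n) (hwa n) (iW n)
      filter_upwards [c0, c1, c2, cXA, cA1] with x h0 h1 h2 h3 h4
      simp only [Pi.add_apply, Pi.sub_apply] at h0 h1 h2
      rw [h0, h1, cw, h2, h3, h4]
    -- conclusion
    have hδnn : ∀ᵐ x ∂μ, 0 ≤ δ' x :=
      condExp_nonneg (Filter.Eventually.of_forall fun x =>
        mul_nonneg (sq_nonneg _) (hD0 (n+1) x))
    have cDle : ∀ᵐ x ∂μ, (μ[Dproc N w β ΔS (n+1) | ℱ n]) x ≤ (N : ℝ) - (n+1) + 1 := by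
      have t := condExp_condExp_of_le (μ := μ) (f := Dproc N w β ΔS (n+1))
        (ℱ.mono (Nat.le_succ n)) (ℱ.le (n+1))
      have mono := condExp_mono (m := ℱ n) (μ := μ)
        (integrable_condExp (f := Dproc N w β ΔS (n+1)) (m := ℱ (n+1)))
        (integrable_const ((N : ℝ) - (n+1) + 1)) IH1
      rw [condExp_const (ℱ.le n)] at mono
      filter_upwards [t, mono] with x h1 h2
      rw [← h1]
      exact h2
    constructor
    · filter_upwards [ED, cDle, hδnn] with x h1 h2 h3
      rw [h1]
      have hw' := (hw n x).2
      have hkey : α' x / δ' x * (α' x / δ' x) * δ' x - 2 * (α' x / δ' x * α' x) ≤ 0 := by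
        rcases eq_or_lt_of_le h3 with h | h
        · rw [← h]; simp
        · have e1 : α' x / δ' x * (α' x / δ' x) * δ' x - 2 * (α' x / δ' x * α' x)
              = -(α' x ^ 2 / δ' x) := by
            field_simp
            ring
          rw [e1]
          exact neg_nonpos.2 (div_nonneg (sq_nonneg _) h.le)
      push_cast at h2
      linarith
    · refine EA.trans (Filter.EventuallyEq.trans ?_ ED.symm)
      refine Filter.Eventually.of_forall fun x => ?_
      have e0 : α' x / δ' x * (α' x / δ' x) * δ' x = α' x / δ' x * α' x := by
        rcases eq_or_ne (δ' x) 0 with h | h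
        · simp [h]
        · have h2 : α' x / δ' x * δ' x = α' x := div_mul_cancel₀ _ h
          calc α' x / δ' x * (α' x / δ' x) * δ' x
              = α' x / δ' x * (α' x / δ' x * δ' x) := by ring
            _ = α' x / δ' x * α' x := by rw [h2]
      simp only [e0]
      ring
  -- closing the induction
  have key : ∀ k n, n ≤ N → N - n ≤ k →
      ((∀ᵐ x ∂μ, (μ[Dproc N w β ΔS n | ℱ n]) x ≤ (N : ℝ) - n + 1) ∧
        μ[Aproc N w β ΔS n | ℱ n] =ᵐ[μ] μ[Dproc N w β ΔS n | ℱ n]) := by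
    intro k
    induction k with
    | zero =>
      intro n hn h0
      have : n = N := by omega
      subst this
      exact base
    | succ k ih =>
      intro n hn hk
      rcases eq_or_lt_of_le hn with h | h
      · subst h; exact base
      · have h' := ih (n+1) (by omega) (by omega)
        simp only [Nat.cast_add, Nat.cast_one] at h'
        exact step n h h'
  -- final assembly
  intro n hn
  have hkey := key (N - n) n hn le_rfl
  constructor
  · have c1 : μ[fun y => Aproc N w β ΔS n y ^ 2 | ℱ n] ≤ᵐ[μ]
        μ[fun y => ((N : ℝ) - n + 1) * Dproc N w β ΔS n y | ℱ n] :=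
      condExp_mono (hA2int n) ((hDint n).const_mul _)
        (Filter.Eventually.of_forall fun x => sq_Aproc_le hn (fun i => hw i x))
    have c2 : μ[fun y => ((N : ℝ) - n + 1) * Dproc N w β ΔS n y | ℱ n]
        =ᵐ[μ] ((N : ℝ) - n + 1) • μ[Dproc N w β ΔS n | ℱ n] :=
      condExp_smul ((N : ℝ) - n + 1) (Dproc N w β ΔS n) (ℱ n)
    have hcnn : (0:ℝ) ≤ (N : ℝ) - n + 1 := by
      have : (n : ℝ) ≤ N := by exact_mod_cast hn
      linarith
    filter_upwards [c1, c2, hkey.1] with x h1 h2 h3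
    rw [h2] at h1
    simp only [Pi.smul_apply, smul_eq_mul] at h1
    calc (μ[fun y => Aproc N w β ΔS n y ^ 2 | ℱ n]) x
        ≤ ((N : ℝ) - n + 1) * (μ[Dproc N w β ΔS n | ℱ n]) x := h1
      _ ≤ ((N : ℝ) - n + 1) * ((N : ℝ) - n + 1) :=
          mul_le_mul_of_nonneg_left h3 hcnn
      _ = ((N : ℝ) - n + 1) ^ 2 := by ring
  · exact (memLp_two_iff_integrable_sq (hAint n).aestronglyMeasurable).2 (hA2int n)
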